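/- Let $g_1, g_2$ be independent exponential random variables with means $\varepsilon_1, \varepsilon_2 > 0$, and let $c > 0$. Then $\Pr\left(\frac{g_1 g_2}{g_1 + g_2} < c\right) = 1 - e^{-(1/\varepsilon_1 + 1/\varepsilon_2)c} \cdot \frac{2c}{\sqrt{\varepsilon_1 \varepsilon_2}} K_1\left(\frac{2c}{\sqrt{\varepsilon_1 \varepsilon_2}}\right)$, where $K_1$ is the first-order modified Bessel function of the second kind. -/

import Mathlib

open MeasureTheory ProbabilityTheory

/-- The modified Bessel function of the second kind of order one, via the
integral representation `K₁(x) = ∫₀^∞ exp (-x cosh t) cosh t dt` (valid for `x > 0`). -/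
noncomputable def besselK1 (x : ℝ) : ℝ :=
  ∫ t in Set.Ioi (0 : ℝ), Real.exp (-x * Real.cosh t) * Real.cosh t

open Real Set
open scoped ENNReal
set_option maxHeartbeats 1000000


lemma sq_le_sinh_sq (s : ℝ) : s ^ 2 ≤ Real.sinh s ^ 2 := by
  rcases le_or_gt 0 s with h | h
  · exact pow_le_pow_left₀ h ((Real.self_le_sinh_iff).2 h) 2
  · have h' : (0:ℝ) ≤ -s := by linarith
    have := pow_le_pow_left₀ h' ((Real.self_le_sinh_iff).2 h') 2
    simpa [Real.sinh_neg, neg_pow] using this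

lemma cosh_lb (t : ℝ) : 1 + t ^ 2 / 2 ≤ Real.cosh t := by
  have h : Real.cosh t = 2 * Real.sinh (t/2) ^ 2 + 1 := by
    have h2 := Real.cosh_sq (t/2)
    have h1 : Real.cosh (2 * (t/2)) = Real.cosh (t/2) ^ 2 + Real.sinh (t/2) ^ 2 :=
      Real.cosh_two_mul _
    rw [show 2 * (t/2) = t by ring] at h1
    rw [h1, h2]; ring
  have := sq_le_sinh_sq (t/2)
  nlinarith

lemma mul_exp_le (x : ℝ) (hx : 0 < x) (s : ℝ) (hs : 0 ≤ s) :
    s * Real.exp (-(x * s)) ≤ (2 / x) * Real.exp (-(x * s / 2)) := by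
  have h1 : x * s / 2 + 1 ≤ Real.exp (x * s / 2) := Real.add_one_le_exp _
  have h2 : Real.exp (-(x * s)) = Real.exp (-(x * s / 2)) * Real.exp (-(x * s / 2)) := by
    rw [← Real.exp_add]; ring_nf
  rw [h2]
  have h3 : Real.exp (-(x * s / 2)) * Real.exp (x * s / 2) = 1 := by
    rw [← Real.exp_add]; simp
  have h4 := Real.exp_pos (-(x * s / 2))
  have h5 := Real.exp_pos (x * s / 2)
  rw [show s * (Real.exp (-(x*s/2)) * Real.exp (-(x*s/2))) = (s * Real.exp (-(x*s/2))) * Real.exp (-(x*s/2)) by ring]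
  have key : s * Real.exp (-(x * s / 2)) ≤ 2 / x := by
    rw [le_div_iff₀ hx]
    calc s * Real.exp (-(x*s/2)) * x = (x * s) * Real.exp (-(x*s/2)) := by ring
    _ ≤ 2 * Real.exp (x*s/2) * Real.exp (-(x*s/2)) := by nlinarith
    _ = 2 := by rw [mul_assoc, ← Real.exp_add]; simp
  calc s * Real.exp (-(x*s/2)) * Real.exp (-(x*s/2)) ≤ (2/x) * Real.exp (-(x*s/2)) := by
        apply mul_le_mul_of_nonneg_right key (le_of_lt h4)
  _ = 2 / x * Real.exp (-(x * s / 2)) := rfl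

lemma integrable_cosh_exp {x : ℝ} (hx : 0 < x) :
    Integrable (fun t : ℝ => Real.exp (-x * Real.cosh t) * Real.cosh t) := by
  have hbound : ∀ t : ℝ, ‖Real.exp (-x * Real.cosh t) * Real.cosh t‖
      ≤ (2 / x * Real.exp (-(x/2))) * Real.exp (-(x/4) * t ^ 2) := by
    intro t
    have hct : (0:ℝ) < Real.cosh t := Real.cosh_pos t
    rw [Real.norm_eq_abs, abs_of_nonneg (by positivity)]
    have h1 : Real.exp (-x * Real.cosh t) * Real.cosh t ≤ (2/x) * Real.exp (-(x * Real.cosh t / 2)) := by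
      have := mul_exp_le x hx (Real.cosh t) hct.le
      calc Real.exp (-x * Real.cosh t) * Real.cosh t
          = Real.cosh t * Real.exp (-(x * Real.cosh t)) := by rw [neg_mul]; ring
        _ ≤ (2/x) * Real.exp (-(x * Real.cosh t / 2)) := this
    have h2 : Real.exp (-(x * Real.cosh t / 2)) ≤ Real.exp (-(x/2)) * Real.exp (-(x/4) * t^2) := by
      rw [← Real.exp_add]
      apply Real.exp_le_exp.2
      have := cosh_lb t
      nlinarith
    calc Real.exp (-x * Real.cosh t) * Real.cosh t ≤ (2/x) * Real.exp (-(x * Real.cosh t / 2)) := h1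
      _ ≤ (2/x) * (Real.exp (-(x/2)) * Real.exp (-(x/4) * t^2)) := by
          apply mul_le_mul_of_nonneg_left h2 (by positivity)
      _ = (2 / x * Real.exp (-(x/2))) * Real.exp (-(x/4) * t ^ 2) := by ring
  have hg : Integrable (fun t : ℝ => (2 / x * Real.exp (-(x/2))) * Real.exp (-(x/4) * t ^ 2)) :=
    (integrable_exp_neg_mul_sq (by positivity : (0:ℝ) < x/4)).const_mul _
  refine hg.mono ((Real.continuous_exp.comp (continuous_const.mul Real.continuous_cosh)).mul
    Real.continuous_cosh).aestronglyMeasurable (Filter.Eventually.of_forall fun t => ?_)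
  calc ‖Real.exp (-x * Real.cosh t) * Real.cosh t‖
      ≤ (2 / x * Real.exp (-(x/2))) * Real.exp (-(x/4) * t ^ 2) := hbound t
    _ ≤ ‖(2 / x * Real.exp (-(x/2))) * Real.exp (-(x/4) * t ^ 2)‖ := le_abs_self _

-- assume from chunk 1:

lemma besselK1_eq_half_integral {x : ℝ} :
    (2:ℝ) * besselK1 x = ∫ t : ℝ, Real.exp (-x * Real.cosh t) * Real.cosh t := by
  rw [besselK1]
  rw [show (∫ t : ℝ, Real.exp (-x * Real.cosh t) * Real.cosh t)
      = ∫ t : ℝ, Real.exp (-x * Real.cosh |t|) * Real.cosh |t| by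
    congr 1; ext t; rw [Real.cosh_abs]]
  rw [integral_comp_abs (f := fun t => Real.exp (-x * Real.cosh t) * Real.cosh t)]

lemma exp_symm_integral {x : ℝ} (hx : 0 < x) :
    ∫ t : ℝ, Real.exp (-x * Real.cosh t) * Real.exp t
      = ∫ t : ℝ, Real.exp (-x * Real.cosh t) * Real.cosh t := by
  have hint : Integrable (fun t : ℝ => Real.exp (-x * Real.cosh t) * Real.exp t) := by
    have hg : Integrable (fun t : ℝ => 2 * (Real.exp (-x * Real.cosh t) * Real.cosh t)) :=
      (integrable_cosh_exp hx).const_mul 2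
    have hmeas : AEStronglyMeasurable (fun t : ℝ => Real.exp (-x * Real.cosh t) * Real.exp t) volume :=
      ((Real.continuous_exp.comp (continuous_const.mul Real.continuous_cosh)).mul
        Real.continuous_exp).aestronglyMeasurable
    refine hg.mono' hmeas (Filter.Eventually.of_forall fun t => ?_)
    have h1 : Real.exp t ≤ 2 * Real.cosh t := by
        rw [Real.cosh_eq]; have := Real.exp_pos (-t); linarith
    have h2 : (0:ℝ) < Real.exp (-x * Real.cosh t) := Real.exp_pos _
    rw [Real.norm_eq_abs, abs_of_nonneg (by positivity)]
    calc Real.exp (-x * Real.cosh t) * Real.exp t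
        ≤ Real.exp (-x * Real.cosh t) * (2 * Real.cosh t) :=
          mul_le_mul_of_nonneg_left h1 h2.le
      _ = 2 * (Real.exp (-x * Real.cosh t) * Real.cosh t) := by ring
  have hint' : Integrable (fun t : ℝ => Real.exp (-x * Real.cosh t) * Real.exp (-t)) := by
    have := hint.comp_neg
    simpa [Real.cosh_neg] using this
  have hneg : ∫ t : ℝ, Real.exp (-x * Real.cosh t) * Real.exp t
      = ∫ t : ℝ, Real.exp (-x * Real.cosh t) * Real.exp (-t) := by
    rw [← integral_neg_eq_self (fun t : ℝ => Real.exp (-x * Real.cosh t) * Real.exp t)]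
    congr 1; ext t; simp [Real.cosh_neg]
  have hsum := integral_add hint hint'
  have : (fun t : ℝ => Real.exp (-x * Real.cosh t) * Real.exp t
      + Real.exp (-x * Real.cosh t) * Real.exp (-t))
      = fun t : ℝ => 2 * (Real.exp (-x * Real.cosh t) * Real.cosh t) := by
    ext t; rw [Real.cosh_eq]; ring
  rw [this] at hsum
  rw [integral_const_mul] at hsum
  linarith [hsum, hneg]

lemma bessel_integral {p q : ℝ} (hp : 0 < p) (hq : 0 < q) :
    ∫ u in Ioi (0:ℝ), Real.exp (-(p * u + q / u))
      = 2 * Real.sqrt (q / p) * besselK1 (2 * Real.sqrt (p * q)) := by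
  set m := Real.sqrt (q / p) with hm
  have hm0 : 0 < m := Real.sqrt_pos.2 (by positivity)
  have hmsq : m ^ 2 = q / p := Real.sq_sqrt (by positivity)
  set s := Real.sqrt (p * q) with hs
  have hs0 : 0 < s := Real.sqrt_pos.2 (by positivity)
  have hpm : p * m = s := by
    rw [hs, show p * q = (p * m) ^ 2 by rw [mul_pow, hmsq]; field_simp]
    exact (Real.sqrt_sq (by positivity)).symm
  have hqm : q / m = s := by
    rw [hs, show p * q = (q / m) ^ 2 by rw [div_pow, hmsq]; field_simp]
    exact (Real.sqrt_sq (by positivity)).symm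
  -- change of variables u = m * exp t
  have himg : (fun t : ℝ => m * Real.exp t) '' univ = Ioi (0:ℝ) := by
    ext y
    simp only [image_univ, mem_range, mem_Ioi]
    constructor
    · rintro ⟨t, rfl⟩; positivity
    · intro hy; exact ⟨Real.log (y / m), by
        rw [Real.exp_log (by positivity)]; field_simp⟩
  have hderiv : ∀ t ∈ (univ : Set ℝ), HasDerivWithinAt (fun t : ℝ => m * Real.exp t)
      (m * Real.exp t) univ t := fun t _ =>
    ((Real.hasDerivAt_exp t).const_mul m).hasDerivWithinAt
  have hinj : InjOn (fun t : ℝ => m * Real.exp t) univ := by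
    intro a _ b _ h
    simpa using mul_left_cancel₀ (ne_of_gt hm0) h |> Real.exp_injective
  have := integral_image_eq_integral_abs_deriv_smul MeasurableSet.univ hderiv hinj
    (fun u => Real.exp (-(p * u + q / u)))
  rw [himg] at this
  rw [this]
  have heq : ∀ t : ℝ, |m * Real.exp t| • Real.exp (-(p * (m * Real.exp t) + q / (m * Real.exp t)))
      = m * (Real.exp (-(2 * s) * Real.cosh t) * Real.exp t) := by
    intro t
    have het : (0:ℝ) < Real.exp t := Real.exp_pos t
    rw [smul_eq_mul, abs_of_nonneg (by positivity)]
    have harg : p * (m * Real.exp t) + q / (m * Real.exp t) = 2 * s * Real.cosh t := by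
      rw [Real.cosh_eq]
      have : q / (m * Real.exp t) = (q / m) * Real.exp (-t) := by
        rw [Real.exp_neg]; field_simp
      rw [this, hqm, show p * (m * Real.exp t) = (p * m) * Real.exp t by ring, hpm]
      ring
    rw [harg]; ring_nf
  rw [show (∫ t : ℝ in univ, |m * Real.exp t| • Real.exp (-(p * (m * Real.exp t) + q / (m * Real.exp t))))
      = ∫ t : ℝ, m * (Real.exp (-(2 * s) * Real.cosh t) * Real.exp t) by
    rw [Measure.restrict_univ]; congr 1; ext t; exact heq t]
  rw [integral_const_mul, exp_symm_integral (by positivity : (0:ℝ) < 2 * s),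
    ← besselK1_eq_half_integral]
  ring

lemma expMeasure_eq_withDensity (r : ℝ) :
    expMeasure r = volume.withDensity (exponentialPDF r) := rfl

lemma expMeasure_null_of_subset_Iio {r : ℝ} {s : Set ℝ} (hs : s ⊆ Iio 0) :
    expMeasure r s = 0 := by
  refine measure_mono_null hs ?_
  rw [expMeasure_eq_withDensity, withDensity_apply _ measurableSet_Iio]
  exact lintegral_exponentialPDF_of_nonpos le_rfl

lemma expMeasure_singleton {r : ℝ} (t : ℝ) : expMeasure r {t} = 0 := by
  rw [expMeasure_eq_withDensity, withDensity_apply _ (measurableSet_singleton t)]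
  exact setLIntegral_measure_zero _ _ (measure_singleton t)

lemma expMeasure_Ici {r : ℝ} (hr : 0 < r) {t : ℝ} (ht : 0 ≤ t) :
    expMeasure r (Ici t) = ENNReal.ofReal (Real.exp (-(r * t))) := by
  haveI := isProbabilityMeasure_expMeasure hr
  have hIic : expMeasure r (Iic t) = ENNReal.ofReal (1 - Real.exp (-(r * t))) := by
    rw [← ofReal_cdf (expMeasure r) t]
    congr 1
    have := cdf_expMeasure_eq hr t
    rw [this, if_pos ht]
  have hIio : expMeasure r (Iio t) = expMeasure r (Iic t) := by
    refine le_antisymm (measure_mono Iio_subset_Iic_self) ?_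
    calc expMeasure r (Iic t) = expMeasure r (Iio t ∪ {t}) := by rw [Iio_union_right]
      _ ≤ expMeasure r (Iio t) + expMeasure r {t} := measure_union_le _ _
      _ = expMeasure r (Iio t) := by rw [expMeasure_singleton]; simp
  have hcompl : expMeasure r (Ici t) = 1 - expMeasure r (Iio t) := by
    rw [← compl_Iio]
    exact prob_compl_eq_one_sub measurableSet_Iio
  rw [hcompl, hIio, hIic]
  have h1 : Real.exp (-(r * t)) ≤ 1 := Real.exp_le_one_iff.2 (neg_nonpos.2 (mul_nonneg hr.le ht))
  rw [show (1 : ℝ≥0∞) = ENNReal.ofReal 1 by simp, ← ENNReal.ofReal_sub _ (by linarith)]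
  norm_num

lemma slice_zero {r c x : ℝ} (hc : 0 < c) (hx0 : 0 ≤ x) (hxc : x ≤ c) :
    expMeasure r {y : ℝ | c ≤ x * y / (x + y)} = 0 := by
  apply expMeasure_null_of_subset_Iio
  intro y hy
  simp only [mem_setOf_eq] at hy
  by_contra h
  simp only [mem_Iio, not_lt] at h
  rcases eq_or_lt_of_le hx0 with heq | hx
  · rw [← heq] at hy; simp at hy; linarith
  · have hxy : 0 < x + y := by linarith
    rw [le_div_iff₀ hxy] at hy
    nlinarith

lemma slice_Ici {r c x : ℝ} (hr : 0 < r) (hc : 0 < c) (hx : c < x) :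
    expMeasure r {y : ℝ | c ≤ x * y / (x + y)}
      = ENNReal.ofReal (Real.exp (-(r * (c * x / (x - c))))) := by
  set t := c * x / (x - c) with ht
  have hxc : 0 < x - c := by linarith
  have hx0 : 0 < x := lt_trans hc hx
  have ht0 : 0 < t := by rw [ht]; positivity
  rw [← expMeasure_Ici hr ht0.le]
  apply le_antisymm
  · have hsub : {y : ℝ | c ≤ x * y / (x + y)} ⊆ Ici t ∪ Iio 0 := by
      intro y hy
      simp only [mem_setOf_eq] at hy
      rcases lt_or_ge y 0 with h | h
      · exact Or.inr h
      · left
        have hxy : 0 < x + y := by linarith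
        rw [le_div_iff₀ hxy] at hy
        rw [mem_Ici, ht, div_le_iff₀ hxc]
        nlinarith
    calc expMeasure r {y : ℝ | c ≤ x * y / (x + y)}
        ≤ expMeasure r (Ici t ∪ Iio 0) := measure_mono hsub
      _ ≤ expMeasure r (Ici t) + expMeasure r (Iio 0) := measure_union_le _ _
      _ = expMeasure r (Ici t) := by
          rw [expMeasure_null_of_subset_Iio (subset_refl _), add_zero]
  · apply measure_mono
    intro y hy
    rw [mem_Ici] at hy
    have hy0 : 0 < y := lt_of_lt_of_le ht0 hy
    have hxy : 0 < x + y := by linarith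
    simp only [mem_setOf_eq]
    rw [le_div_iff₀ hxy]
    rw [ht, div_le_iff₀ hxc] at hy
    nlinarith

lemma prod_outage {r1 r2 c : ℝ} (h1 : 0 < r1) (h2 : 0 < r2) (hc : 0 < c) :
    ((expMeasure r1).prod (expMeasure r2)) {p : ℝ × ℝ | c ≤ p.1 * p.2 / (p.1 + p.2)}
      = ENNReal.ofReal (Real.exp (-(r1 + r2) * c) * (2 * c * Real.sqrt (r1 * r2))
          * besselK1 (2 * c * Real.sqrt (r1 * r2))) := by
  haveI := isProbabilityMeasure_expMeasure h1
  haveI := isProbabilityMeasure_expMeasure h2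
  have hT : MeasurableSet {p : ℝ × ℝ | c ≤ p.1 * p.2 / (p.1 + p.2)} :=
    measurableSet_le measurable_const
      ((measurable_fst.mul measurable_snd).div (measurable_fst.add measurable_snd))
  rw [Measure.prod_apply hT]
  have hslice : ∀ x : ℝ, (Prod.mk x ⁻¹' {p : ℝ × ℝ | c ≤ p.1 * p.2 / (p.1 + p.2)})
      = {y : ℝ | c ≤ x * y / (x + y)} := fun x => rfl
  simp_rw [hslice]
  set F : ℝ → ℝ≥0∞ := fun x => expMeasure r2 {y : ℝ | c ≤ x * y / (x + y)} with hF
  have hFmeas : Measurable F := by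
    have := measurable_measure_prodMk_left (ν := expMeasure r2) hT
    simpa [hslice] using this
  have hpdfm : Measurable (exponentialPDF r1) := (measurable_gammaPDFReal 1 r1).ennreal_ofReal
  rw [show expMeasure r1 = volume.withDensity (exponentialPDF r1) from rfl,
    lintegral_withDensity_eq_lintegral_mul _ hpdfm hFmeas]
  simp only [Pi.mul_apply]
  -- split integral at c
  have hsplit := (lintegral_add_compl (fun x => exponentialPDF r1 x * F x)
    (measurableSet_Ioi (a := c)) (μ := volume)).symm
  rw [hsplit]
  have hzero : ∫⁻ x in (Ioi c)ᶜ, exponentialPDF r1 x * F x = 0 := by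
    rw [compl_Ioi]
    rw [setLIntegral_congr_fun measurableSet_Iic
      (fun x (hx : x ∈ Iic c) => ?_), lintegral_zero]
    rcases lt_or_ge x 0 with h | h
    · rw [exponentialPDF_of_neg h, zero_mul]
    · rw [hF]; simp only; rw [slice_zero hc h hx, mul_zero]
  rw [hzero, add_zero]
  -- evaluate on Ioi c
  have hcong : ∫⁻ x in Ioi c, exponentialPDF r1 x * F x
      = ∫⁻ x in Ioi c, ENNReal.ofReal
          (r1 * Real.exp (-(r1 * x)) * Real.exp (-(r2 * (c * x / (x - c))))) := by
    refine setLIntegral_congr_fun measurableSet_Ioi (fun x hx => ?_)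
    have hx' : c < x := hx
    have hx0 : (0:ℝ) ≤ x := le_of_lt (lt_trans hc hx')
    rw [exponentialPDF_of_nonneg hx0, hF]; simp only
    rw [slice_Ici h2 hc hx', ← ENNReal.ofReal_mul (by positivity)]
  rw [hcong]
  -- convert to Bochner integral
  set g : ℝ → ℝ := fun x => r1 * Real.exp (-(r1 * x)) * Real.exp (-(r2 * (c * x / (x - c))))
    with hg
  have hgmeas : AEStronglyMeasurable g (volume.restrict (Ioi c)) := by
    apply ContinuousOn.aestronglyMeasurable _ measurableSet_Ioi
    apply ContinuousOn.mul
    · exact ((continuous_const.mul (Real.continuous_exp.comp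
        (continuous_const.mul continuous_id).neg)).continuousOn)
    · apply Real.continuous_exp.comp_continuousOn
      apply ContinuousOn.neg
      apply ContinuousOn.mul continuousOn_const
      exact ContinuousOn.div (continuousOn_const.mul continuousOn_id)
        (continuousOn_id.sub continuousOn_const)
        (fun x hx => sub_ne_zero.2 (ne_of_gt hx))
  have hgint : IntegrableOn g (Ioi c) := by
    refine Integrable.mono' ((exp_neg_integrableOn_Ioi c h1).const_mul r1) hgmeas
      ((ae_restrict_iff' measurableSet_Ioi).2 (ae_of_all _ fun x hx => ?_))
    have hx' : c < x := hx
    have hxc : (0:ℝ) < x - c := by linarith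
    rw [hg]; simp only
    rw [Real.norm_eq_abs, abs_of_nonneg (by positivity)]
    have h3 : Real.exp (-(r2 * (c * x / (x - c)))) ≤ 1 := by
      apply Real.exp_le_one_iff.2
      have : (0:ℝ) ≤ c * x / (x - c) := div_nonneg (mul_nonneg hc.le (by linarith)) hxc.le
      nlinarith
    calc r1 * Real.exp (-(r1 * x)) * Real.exp (-(r2 * (c * x / (x - c))))
        ≤ r1 * Real.exp (-(r1 * x)) * 1 := by
          apply mul_le_mul_of_nonneg_left h3 (by positivity)
      _ = r1 * Real.exp (-r1 * x) := by rw [mul_one, neg_mul]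
  have hgpos : 0 ≤ᵐ[volume.restrict (Ioi c)] g := ae_of_all _ fun x => by positivity
  rw [← ofReal_integral_eq_lintegral_ofReal hgint hgpos]
  congr 1
  -- shift the integral
  have hshift : ∫ x in Ioi c, g x = ∫ u in Ioi (0:ℝ), g (u + c) := by
    have hpre : ((· + c) : ℝ → ℝ) ⁻¹' (Ioi c) = Ioi (0:ℝ) := by
      ext u; simp [mem_Ioi]
    rw [← (measurePreserving_add_right volume c).setIntegral_preimage_emb
      (MeasurableEquiv.addRight c).measurableEmbedding g (Ioi c), hpre]
  rw [hshift]
  have hcong2 : ∫ u in Ioi (0:ℝ), g (u + c)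
      = ∫ u in Ioi (0:ℝ), (r1 * Real.exp (-(r1 + r2) * c))
          * Real.exp (-(r1 * u + r2 * c ^ 2 / u)) := by
    refine setIntegral_congr_fun measurableSet_Ioi (fun u hu => ?_)
    have hu' : (0:ℝ) < u := hu
    rw [hg]; simp only
    rw [show u + c - c = u by ring, mul_assoc, mul_assoc, ← Real.exp_add, ← Real.exp_add]
    congr 2
    field_simp
    ring
  rw [hcong2, integral_const_mul, bessel_integral h1 (by positivity : (0:ℝ) < r2 * c ^ 2)]
  have hkey1 : Real.sqrt (r1 * (r2 * c ^ 2)) = c * Real.sqrt (r1 * r2) := by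
    rw [show r1 * (r2 * c ^ 2) = (r1 * r2) * c ^ 2 by ring, Real.sqrt_mul (by positivity),
      Real.sqrt_sq hc.le]
    ring
  have hkey2 : r1 * (2 * Real.sqrt (r2 * c ^ 2 / r1)) = 2 * c * Real.sqrt (r1 * r2) := by
    have e1 : r1 * Real.sqrt (r2 * c ^ 2 / r1) = Real.sqrt (r1 ^ 2 * (r2 * c ^ 2 / r1)) := by
      rw [Real.sqrt_mul (by positivity), Real.sqrt_sq h1.le]
    have e2 : r1 ^ 2 * (r2 * c ^ 2 / r1) = (r1 * r2) * c ^ 2 := by field_simp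
    calc r1 * (2 * Real.sqrt (r2 * c ^ 2 / r1)) = 2 * (r1 * Real.sqrt (r2 * c ^ 2 / r1)) := by ring
      _ = 2 * Real.sqrt ((r1 * r2) * c ^ 2) := by rw [e1, e2]
      _ = 2 * c * Real.sqrt (r1 * r2) := by
          rw [Real.sqrt_mul (by positivity), Real.sqrt_sq hc.le]; ring
  rw [hkey1, show (2:ℝ) * (c * Real.sqrt (r1 * r2)) = 2 * c * Real.sqrt (r1 * r2) by ring]
  linear_combination (Real.exp (-(r1 + r2) * c) * besselK1 (2 * c * Real.sqrt (r1 * r2))) * hkey2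

theorem mf_connection_outage_prob
    {Ω : Type*} [MeasurableSpace Ω] (μ : Measure Ω) [IsProbabilityMeasure μ]
    (g1 g2 : Ω → ℝ) (hg1 : Measurable g1) (hg2 : Measurable g2)
    (ε1 ε2 : ℝ) (hε1 : 0 < ε1) (hε2 : 0 < ε2)
    (hlaw1 : Measure.map g1 μ = expMeasure (1 / ε1))
    (hlaw2 : Measure.map g2 μ = expMeasure (1 / ε2))
    (hindep : IndepFun g1 g2 μ)
    (c : ℝ) (hc : 0 < c) :
    (μ {ω | g1 ω * g2 ω / (g1 ω + g2 ω) < c}).toReal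
      = 1 - Real.exp (-(1 / ε1 + 1 / ε2) * c)
          * (2 * c / Real.sqrt (ε1 * ε2)) * besselK1 (2 * c / Real.sqrt (ε1 * ε2)) := by
  have h1 : (0:ℝ) < 1 / ε1 := by positivity
  have h2 : (0:ℝ) < 1 / ε2 := by positivity
  set ν := (expMeasure (1/ε1)).prod (expMeasure (1/ε2)) with hν
  haveI := isProbabilityMeasure_expMeasure h1
  haveI := isProbabilityMeasure_expMeasure h2
  have hmap : μ.map (fun ω => (g1 ω, g2 ω)) = ν := by
    rw [hν, ← hlaw1, ← hlaw2]
    exact (indepFun_iff_map_prod_eq_prod_map_map hg1.aemeasurable hg2.aemeasurable).mp hindep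
  have hS : MeasurableSet {p : ℝ × ℝ | p.1 * p.2 / (p.1 + p.2) < c} :=
    measurableSet_lt ((measurable_fst.mul measurable_snd).div (measurable_fst.add measurable_snd))
      measurable_const
  have hT : MeasurableSet {p : ℝ × ℝ | c ≤ p.1 * p.2 / (p.1 + p.2)} :=
    measurableSet_le measurable_const
      ((measurable_fst.mul measurable_snd).div (measurable_fst.add measurable_snd))
  have hev : μ {ω | g1 ω * g2 ω / (g1 ω + g2 ω) < c}
      = ν {p : ℝ × ℝ | p.1 * p.2 / (p.1 + p.2) < c} := by
    rw [← hmap, Measure.map_apply (hg1.prodMk hg2) hS]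
    rfl
  have hcompl : {p : ℝ × ℝ | c ≤ p.1 * p.2 / (p.1 + p.2)}ᶜ
      = {p : ℝ × ℝ | p.1 * p.2 / (p.1 + p.2) < c} := by
    ext p; simp [not_le]
  have hνS : ν {p : ℝ × ℝ | p.1 * p.2 / (p.1 + p.2) < c}
      = 1 - ν {p : ℝ × ℝ | c ≤ p.1 * p.2 / (p.1 + p.2)} := by
    rw [← hcompl]
    exact prob_compl_eq_one_sub hT
  set A : ℝ := Real.exp (-(1/ε1 + 1/ε2) * c) * (2 * c * Real.sqrt ((1/ε1) * (1/ε2)))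
      * besselK1 (2 * c * Real.sqrt ((1/ε1) * (1/ε2))) with hA
  have hout : ν {p : ℝ × ℝ | c ≤ p.1 * p.2 / (p.1 + p.2)} = ENNReal.ofReal A :=
    prod_outage h1 h2 hc
  have hA0 : 0 ≤ A := by
    have hK : 0 ≤ besselK1 (2 * c * Real.sqrt ((1/ε1) * (1/ε2))) := by
      apply setIntegral_nonneg measurableSet_Ioi
      intro t _
      positivity
    rw [hA]
    positivity
  have hle : ENNReal.ofReal A ≤ 1 := by
    rw [← hout]; exact prob_le_one
  have hsqrt : Real.sqrt ((1/ε1) * (1/ε2)) = 1 / Real.sqrt (ε1 * ε2) := by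
    rw [show (1/ε1) * (1/ε2) = (ε1 * ε2)⁻¹ by field_simp, Real.sqrt_inv, one_div]
  rw [hev, hνS, hout, ENNReal.toReal_sub_of_le hle ENNReal.one_ne_top, ENNReal.toReal_one,
    ENNReal.toReal_ofReal hA0, hA, hsqrt]
  rw [show 2 * c * (1 / Real.sqrt (ε1 * ε2)) = 2 * c / Real.sqrt (ε1 * ε2) by ring]
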